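/- Let (w_k)_{k≥1} be a sequence of nonnegative real numbers, let C₁ > 0, C₂ ≥ 0, C₃ > 0, let b ∈ (0,1] and a ≥ b, and set c := a − b and β_k := C₃·k^{−b}. Assume C₃ > c/C₁ and C₁·C₃ ≤ 1, and that w_{k+1} ≤ (1 − C₁·β_k)·w_k + C₂·k^{−a} for every integer k ≥ 1. Then w_k ≤ C·k^{−c} for every integer k ≥ 1, where C := w₁ + C₂/(C₁·C₃ − c). -/

import Mathlib

lemma key_bernoulli (c x : ℝ) (hc : 0 ≤ c) (hx : 0 ≤ x) :
    1 - c * x ≤ (1 + x) ^ (-c) := by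
  have h1 : (0:ℝ) < 1 + x := by linarith
  rcases le_or_gt (1 - c * x) 0 with h | h
  · exact h.trans (Real.rpow_pos_of_pos h1 _).le
  · have hlog : Real.log (1 + x) ≤ x := by
      have := Real.log_le_sub_one_of_pos h1; linarith
    have hlog0 : 0 ≤ Real.log (1 + x) := Real.log_nonneg (by linarith)
    rw [Real.rpow_def_of_pos h1]
    calc 1 - c * x ≤ Real.exp (-(c * x)) := by
          have := Real.add_one_le_exp (-(c * x)); linarith
      _ ≤ Real.exp (Real.log (1 + x) * -c) := by
          apply Real.exp_le_exp.mpr; nlinarith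

theorem stmt_1 (w : ℕ → ℝ) (C₁ C₂ C₃ a b : ℝ)
    (hw : ∀ k : ℕ, 1 ≤ k → 0 ≤ w k)
    (hC₁ : 0 < C₁) (hC₂ : 0 ≤ C₂) (hC₃ : 0 < C₃)
    (hb : 0 < b ∧ b ≤ 1) (hab : b ≤ a)
    (hC₃c : (a - b) / C₁ < C₃) (hC₁C₃ : C₁ * C₃ ≤ 1)
    (hrec : ∀ k : ℕ, 1 ≤ k →
      w (k + 1) ≤ (1 - C₁ * (C₃ * (k : ℝ) ^ (-b))) * w k + C₂ * (k : ℝ) ^ (-a)) :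
    ∀ k : ℕ, 1 ≤ k →
      w k ≤ (w 1 + C₂ / (C₁ * C₃ - (a - b))) * (k : ℝ) ^ (-(a - b)) := by
  set c : ℝ := a - b with hcdef
  have hc : 0 ≤ c := by simp [hcdef]; linarith
  have hgap : 0 < C₁ * C₃ - c := by
    have := (div_lt_iff₀ hC₁).mp hC₃c; linarith [mul_comm C₃ C₁]
  set C : ℝ := w 1 + C₂ / (C₁ * C₃ - c) with hCdef
  have hw1C : w 1 ≤ C := by
    have : 0 ≤ C₂ / (C₁ * C₃ - c) := div_nonneg hC₂ hgap.le
    simp [hCdef]; linarith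
  have hC0 : 0 ≤ C := le_trans (hw 1 le_rfl) hw1C
  intro k hk
  induction k, hk using Nat.le_induction with
  | base => simpa using hw1C
  | succ k hk ih =>
    have hK1 : (1:ℝ) ≤ (k:ℝ) := by exact_mod_cast hk
    have hK0 : (0:ℝ) < (k:ℝ) := by linarith
    have hKb : ((k:ℝ)) ^ (-b) ≤ 1 :=
      Real.rpow_le_one_of_one_le_of_nonpos hK1 (by linarith [hb.1])
    have hKb0 : 0 ≤ ((k:ℝ)) ^ (-b) := (Real.rpow_pos_of_pos hK0 _).le
    have hKc0 : 0 ≤ ((k:ℝ)) ^ (-c) := (Real.rpow_pos_of_pos hK0 _).le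
    have hKa0 : 0 ≤ ((k:ℝ)) ^ (-a) := (Real.rpow_pos_of_pos hK0 _).le
    have hcoef : 0 ≤ 1 - C₁ * (C₃ * (k:ℝ) ^ (-b)) := by
      have h1 : C₁ * (C₃ * (k:ℝ) ^ (-b)) ≤ C₁ * C₃ * 1 := by
        rw [mul_assoc]
        exact mul_le_mul_of_nonneg_left (by
          exact mul_le_mul_of_nonneg_left hKb hC₃.le) hC₁.le
      linarith
    -- split the product of powers:  k^(-b) * k^(-c) = k^(-a)
    have hsplit : ((k:ℝ)) ^ (-b) * ((k:ℝ)) ^ (-c) = ((k:ℝ)) ^ (-a) := by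
      rw [← Real.rpow_add hK0]; ring_nf
      congr 1; rw [hcdef]; ring
    -- step 1: recursion + IH
    have h1 : w (k + 1) ≤ (1 - C₁ * (C₃ * (k:ℝ) ^ (-b))) * (C * (k:ℝ) ^ (-c))
        + C₂ * (k:ℝ) ^ (-a) := by
      refine (hrec k hk).trans ?_
      have := mul_le_mul_of_nonneg_left ih hcoef
      linarith
    -- step 2: algebra
    have hCgap : c * C ≤ C₁ * C₃ * C - C₂ := by
      have hCw : C₂ = (C₁ * C₃ - c) * (C - w 1) := by
        rw [hCdef]; field_simp; ring
      nlinarith [hw 1 le_rfl, hgap]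
    have h2 : (1 - C₁ * (C₃ * (k:ℝ) ^ (-b))) * (C * (k:ℝ) ^ (-c)) + C₂ * (k:ℝ) ^ (-a)
        ≤ C * ((k:ℝ) ^ (-c) * (1 - c * (k:ℝ) ^ (-b))) := by
      have expand : (1 - C₁ * (C₃ * (k:ℝ) ^ (-b))) * (C * (k:ℝ) ^ (-c)) + C₂ * (k:ℝ) ^ (-a)
          = C * (k:ℝ) ^ (-c) - (C₁ * C₃ * C - C₂) * (k:ℝ) ^ (-a) := by
        rw [← hsplit]; ring
      have expand2 : C * ((k:ℝ) ^ (-c) * (1 - c * (k:ℝ) ^ (-b)))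
          = C * (k:ℝ) ^ (-c) - (c * C) * (k:ℝ) ^ (-a) := by
        rw [← hsplit]; ring
      rw [expand, expand2]
      have := mul_le_mul_of_nonneg_right hCgap hKa0
      linarith
    -- step 3:  k^(-c) * (1 - c * k^(-b)) ≤ (k+1)^(-c)
    have h3 : ((k:ℝ)) ^ (-c) * (1 - c * (k:ℝ) ^ (-b)) ≤ ((k:ℝ) + 1) ^ (-c) := by
      have hb1 : ((k:ℝ)) ^ (-(1:ℝ)) ≤ ((k:ℝ)) ^ (-b) :=
        Real.rpow_le_rpow_of_exponent_le hK1 (by linarith [hb.2])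
      have hinv : ((k:ℝ)) ^ (-(1:ℝ)) = 1 / (k:ℝ) := by
        rw [Real.rpow_neg_one]; exact (one_div _).symm
      have step : 1 - c * (k:ℝ) ^ (-b) ≤ (1 + 1 / (k:ℝ)) ^ (-c) := by
        refine le_trans ?_ (key_bernoulli c (1 / (k:ℝ)) hc (by positivity))
        have : c * (1 / (k:ℝ)) ≤ c * (k:ℝ) ^ (-b) := by
          rw [← hinv]; exact mul_le_mul_of_nonneg_left hb1 hc
        linarith
      have hprod : ((k:ℝ) + 1) ^ (-c) = ((k:ℝ)) ^ (-c) * (1 + 1 / (k:ℝ)) ^ (-c) := by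
        rw [← Real.mul_rpow hK0.le (by positivity)]
        congr 1
        field_simp
      rw [hprod]
      exact mul_le_mul_of_nonneg_left step hKc0
    have h3' : C * ((k:ℝ) ^ (-c) * (1 - c * (k:ℝ) ^ (-b))) ≤ C * ((k:ℝ) + 1) ^ (-c) :=
      mul_le_mul_of_nonneg_left h3 hC0
    have := (h1.trans h2).trans h3'
    simpa [Nat.cast_add] using this
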